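/- arXiv:2511.07681 — 7 statements merged into one kernel-verified Lean document; each statement's English description precedes it below -/
import Mathlib

section
/- Assume the travel times satisfy the triangle inequality and the service durations are nonnegative. Let (pi_1, ..., pi_L) be a route with a time-feasible schedule (t_1, ..., t_L) along it, let 1 <= p_1 < p_2 < ... < p_m <= L be positions, set u_r = pi_{p_r}, and let Delta_r be the forward schedule along (u_1, ..., u_m) started at time e(u_1). Then t_{p_r} >= Delta_r for every 1 <= r <= m. In particular, if Delta_m exceeds a latest allowed service time l(u_m), then no route containing (u_1, ..., u_m) as a subsequence admits a time-feasible schedule with t_{p_m} <= l(u_m). -/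
/-- The forward schedule along the sequence of nodes `v 0, v 1, v 2, ...`
started at time `τ`. -/
noncomputable def fwd {V : Type*} (e s : V → ℝ) (d : V → V → ℝ)
    (v : ℕ → V) (τ : ℝ) : ℕ → ℝ
  | 0 => τ
  | r + 1 => max (e (v (r + 1))) (fwd e s d v τ r + s (v r) + d (v r) (v (r + 1)))

/-- `t` is a time-feasible schedule along the first `m` nodes of `v`. -/
def TimeFeasible {V : Type*} (e s : V → ℝ) (d : V → V → ℝ)
    (v : ℕ → V) (m : ℕ) (t : ℕ → ℝ) : Prop :=
  (∀ r < m, e (v r) ≤ t r) ∧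
  (∀ r, r + 1 < m → t r + s (v r) + d (v r) (v (r + 1)) ≤ t (r + 1))

lemma hop_lemma {V : Type*} (e s : V → ℝ) (d : V → V → ℝ)
    (htri : ∀ a b c : V, d a c ≤ d a b + d b c) (hs : ∀ x : V, 0 ≤ s x)
    (π : ℕ → V) (L : ℕ) (t : ℕ → ℝ) (hf : TimeFeasible e s d π L t) :
    ∀ b a, a < b → b < L → t a + s (π a) + d (π a) (π b) ≤ t b := by
  intro b
  induction b with
  | zero => intro a h; omega
  | succ b ih =>
    intro a hab hbL
    rcases Nat.lt_succ_iff_lt_or_eq.mp hab with h | h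
    · have h1 := ih a h (Nat.lt_of_succ_lt hbL)
      have h2 := hf.2 b hbL
      have h3 := htri (π a) (π b) (π (b+1))
      have := hs (π b)
      linarith
    · subst h
      have h2 := hf.2 a hbL
      linarith

lemma forward_schedule_lower_bounds_aux {V : Type*} (e s : V → ℝ)
    (d : V → V → ℝ)
    (htri : ∀ a b c : V, d a c ≤ d a b + d b c) (hs : ∀ x : V, 0 ≤ s x)
    (u : ℕ → V) (m : ℕ) (hm : 1 ≤ m) :
    ∀ (π : ℕ → V) (L : ℕ) (t : ℕ → ℝ) (p : ℕ → ℕ),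
        TimeFeasible e s d π L t →
        (∀ r r', r < r' → r' < m → p r < p r') →
        (∀ r < m, p r < L) →
        (∀ r < m, π (p r) = u r) →
        ∀ r < m, fwd e s d u (e (u 0)) r ≤ t (p r) := by
  intro π L t p hf hmono hpL hsub r
  induction r with
  | zero =>
    intro h0
    have := hf.1 (p 0) (hpL 0 hm)
    rw [hsub 0 hm] at this
    simpa [fwd] using this
  | succ r ih =>
    intro hr1
    have hr : r < m := Nat.lt_of_succ_lt hr1
    have hprev := ih hr
    have hpp : p r < p (r+1) := hmono r (r+1) (Nat.lt_succ_self r) hr1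
    have hhop := hop_lemma e s d htri hs π L t hf (p (r+1)) (p r) hpp (hpL (r+1) hr1)
    rw [hsub r hr, hsub (r+1) hr1] at hhop
    have hearly := hf.1 (p (r+1)) (hpL (r+1) hr1)
    rw [hsub (r+1) hr1] at hearly
    simp only [fwd, max_le_iff]
    exact ⟨hearly, by linarith⟩

/-- Under the triangle inequality and nonnegative service durations, the forward
schedule along a subsequence `u` (started at `e (u 0)`) lower-bounds any
time-feasible schedule of a route containing `u` as a subsequence, evaluated at
the positions of the subsequence.  Consequently, if the forward schedule's final
value exceeds the latest allowed time `l` at the last node of `u`, no route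
containing `u` as a subsequence admits a time-feasible schedule serving that
last node by time `l`. -/
theorem forward_schedule_lower_bounds_subsequence {V : Type*} (e s : V → ℝ)
    (d : V → V → ℝ)
    (htri : ∀ a b c : V, d a c ≤ d a b + d b c) (hs : ∀ x : V, 0 ≤ s x)
    (u : ℕ → V) (m : ℕ) (hm : 1 ≤ m) :
    (∀ (π : ℕ → V) (L : ℕ) (t : ℕ → ℝ) (p : ℕ → ℕ),
        TimeFeasible e s d π L t →
        (∀ r r', r < r' → r' < m → p r < p r') →
        (∀ r < m, p r < L) →
        (∀ r < m, π (p r) = u r) →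
        ∀ r < m, fwd e s d u (e (u 0)) r ≤ t (p r)) ∧
    (∀ l : ℝ, l < fwd e s d u (e (u 0)) (m - 1) →
        ¬ ∃ (π : ℕ → V) (L : ℕ) (t : ℕ → ℝ) (p : ℕ → ℕ),
            TimeFeasible e s d π L t ∧
            (∀ r r', r < r' → r' < m → p r < p r') ∧
            (∀ r < m, p r < L) ∧
            (∀ r < m, π (p r) = u r) ∧
            t (p (m - 1)) ≤ l) := by
  refine ⟨forward_schedule_lower_bounds_aux e s d htri hs u m hm, ?_⟩
  rintro l hl ⟨π, L, t, p, hf, hmono, hpL, hsub, hlast⟩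
  have h1 : m - 1 < m := by omega
  have := forward_schedule_lower_bounds_aux e s d htri hs u m hm π L t p hf hmono hpL hsub (m-1) h1
  linarith
end

section
/- (Soundness of the paper's novel arc-elimination rule 6.) Assume the travel times satisfy the triangle inequality and the service durations are nonnegative. Let i, j, w be nodes (in the intended application, i is a pickup node, w = n+i is its delivery node, and j is a node distinct from i and w) and let l(w) be the latest allowed service time at w. Suppose the forward schedule along the three-node path (i, j, w) started at time e(i) has final value strictly greater than l(w). Then there is no route (pi_1, ..., pi_L) with a time-feasible schedule (t_1, ..., t_L) in which, for some positions p and p'' with p + 1 < p'' <= L, pi_p = i, pi_{p+1} = j, pi_{p''} = w, and t_{p''} <= l(w). Hence, since every route serving the request of i must visit its delivery node w after i, the arc (i, j) can be eliminated from the model. -/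
/-- Soundness of arc-elimination rule 6 (time windows and indirect request
service).  If the forward schedule along the three-node path `(i, j, w)` started
at `e i` finishes strictly after `lw`, then no route with a time-feasible
schedule visits `j` immediately after `i` and visits `w` at some later position
served no later than `lw`. -/
theorem arc_elimination_rule6_sound {V : Type*} (e s : V → ℝ) (d : V → V → ℝ)
    (htri : ∀ a b c : V, d a c ≤ d a b + d b c) (hs : ∀ x : V, 0 ≤ s x)
    (i j w : V) (lw : ℝ)
    (h : lw < fwd e s d (fun r => if r = 0 then i else if r = 1 then j else w)
          (e i) 2) :
    ¬ ∃ (π : ℕ → V) (L : ℕ) (t : ℕ → ℝ) (p p'' : ℕ),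
        TimeFeasible e s d π L t ∧
        p + 1 < p'' ∧ p'' < L ∧
        π p = i ∧ π (p + 1) = j ∧ π p'' = w ∧
        t p'' ≤ lw := by
  rintro ⟨π, L, t, p, p'', ⟨hE, hC⟩, hpp, hpL, hpi, hpj, hpw, hlw⟩
  -- key lemma: for a < b < L, t a + s (π a) + d (π a) (π b) ≤ t b
  have key : ∀ b, ∀ a, a < b → b < L → t a + s (π a) + d (π a) (π b) ≤ t b := by
    intro b
    induction b with
    | zero => omega
    | succ b ih =>
      intro a ha hb
      rcases Nat.lt_succ_iff_lt_or_eq.mp ha with ha' | rfl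
      · have h1 := ih a ha' (by omega)
        have h2 := hC b hb
        have h3 := htri (π a) (π b) (π (b+1))
        have := hs (π b)
        nlinarith
      · exact hC a hb
  have hti : e i ≤ t p := hpi ▸ hE p (by omega)
  have htj : e j ≤ t (p+1) := hpj ▸ hE (p+1) (by omega)
  have hstep : t p + s i + d i j ≤ t (p+1) := by
    have := hC p (by omega)
    rwa [hpi, hpj] at this
  have hfin : t (p+1) + s j + d j w ≤ t p'' := by
    have := key p'' (p+1) hpp hpL
    rwa [hpj, hpw] at this
  have hew : e w ≤ t p'' := hpw ▸ hE p'' hpL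
  simp only [fwd] at h
  norm_num at h
  have hmax : max (e j) (e i + s i + d i j) ≤ t (p+1) := max_le htj (by linarith)
  rcases h with h | h
  · linarith
  · linarith
end

section
/- (Soundness of the paper's time-windows-and-pairing arc-elimination rule for arcs (i, n+j).) Let i and j be pickup nodes of two distinct requests with delivery nodes n+i and n+j, the four nodes being pairwise distinct. First, in any route (pi_1, ..., pi_L) with pairwise distinct entries that contains all four nodes, in which i precedes n+i, j precedes n+j, and n+j immediately follows i, the four nodes necessarily occur in the order j, i, n+j, n+i; i.e., (j, i, n+j, n+i) is a subsequence of the route. Second, assuming the travel times satisfy the triangle inequality and the service durations are nonnegative, if the forward schedule along (j, i, n+j, n+i) started at time e(j) has final value strictly greater than the latest allowed service time l(n+i), then no such route admits a time-feasible schedule whose value at the position of n+i is at most l(n+i); hence the arc (i, n+j) can be eliminated. -/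
lemma chain_le {V : Type*} (e s : V → ℝ) (d : V → V → ℝ)
    (htri : ∀ a b c : V, d a c ≤ d a b + d b c) (hs : ∀ x : V, 0 ≤ s x)
    (π : ℕ → V) (L : ℕ) (t : ℕ → ℝ) (hfeas : TimeFeasible e s d π L t) :
    ∀ q p, p < q → q < L → t p + s (π p) + d (π p) (π q) ≤ t q := by
  intro q
  induction q with
  | zero => omega
  | succ q ih =>
    intro p hp hq
    rcases Nat.lt_succ_iff_lt_or_eq.mp hp with h | h
    · have h1 := ih p h (by omega)
      have h2 := hfeas.2 q hq
      have h3 := htri (π p) (π q) (π (q + 1))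
      have h4 := hs (π q)
      linarith
    · subst h; exact hfeas.2 p hq

/-- Soundness of the time-windows-and-pairing arc-elimination rule for arcs
`(i, n+j)`.  Let `i, ni, j, nj` be pairwise distinct nodes (`ni` and `nj` being
the delivery nodes of the pickups `i` and `j`), occurring on a route with
pairwise distinct entries at positions `pi_, pni, pj, pnj`, with `i` preceding
`ni`, `j` preceding `nj`, and `nj` immediately following `i`.  Then the four
nodes occur in the order `j, i, nj, ni`, and (under the triangle inequality and
nonnegative service durations) if the forward schedule along `(j, i, nj, ni)`
started at `e j` finishes strictly after `l`, then no time-feasible schedule of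
the route serves `ni` by time `l`. -/
theorem arc_elimination_pairing_sound {V : Type*} (e s : V → ℝ)
    (d : V → V → ℝ)
    (htri : ∀ a b c : V, d a c ≤ d a b + d b c) (hs : ∀ x : V, 0 ≤ s x)
    (i ni j nj : V)
    (h1 : i ≠ ni) (h2 : i ≠ j) (h3 : i ≠ nj) (h4 : ni ≠ j) (h5 : ni ≠ nj)
    (h6 : j ≠ nj)
    (π : ℕ → V) (L : ℕ)
    (hdist : ∀ r < L, ∀ r' < L, π r = π r' → r = r')
    (pi_ pni pj pnj : ℕ)
    (hpi : pi_ < L) (hpni : pni < L) (hpj : pj < L) (hpnj : pnj < L)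
    (hπi : π pi_ = i) (hπni : π pni = ni) (hπj : π pj = j) (hπnj : π pnj = nj)
    (hprec1 : pi_ < pni) (hprec2 : pj < pnj) (himm : pnj = pi_ + 1) :
    (pj < pi_ ∧ pi_ < pnj ∧ pnj < pni) ∧
    (∀ l : ℝ,
        l < fwd e s d
              (fun r => if r = 0 then j else if r = 1 then i else
                if r = 2 then nj else ni) (e j) 3 →
        ∀ t : ℕ → ℝ, TimeFeasible e s d π L t → ¬ t pni ≤ l) := by
  have hji : pj ≠ pi_ := by
    intro h; apply h2; rw [← hπi, ← hπj, h]
  have hnn : pni ≠ pnj := by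
    intro h; apply h5; rw [← hπni, ← hπnj, h]
  refine ⟨⟨by omega, by omega, by omega⟩, ?_⟩
  intro l hl t hfeas hle
  have hejt : e j ≤ t pj := by
    have := hfeas.1 pj hpj; rwa [hπj] at this
  have heit : e i ≤ t pi_ := by
    have := hfeas.1 pi_ hpi; rwa [hπi] at this
  have henjt : e nj ≤ t pnj := by
    have := hfeas.1 pnj hpnj; rwa [hπnj] at this
  have henit : e ni ≤ t pni := by
    have := hfeas.1 pni hpni; rwa [hπni] at this
  have hc1 : t pj + s j + d j i ≤ t pi_ := by
    have := chain_le e s d htri hs π L t hfeas pi_ pj (by omega) hpi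
    rwa [hπj, hπi] at this
  have hc2 : t pi_ + s i + d i nj ≤ t pnj := by
    have := hfeas.2 pi_ (by omega)
    rw [hπi, ← himm, hπnj] at this
    exact this
  have hc3 : t pnj + s nj + d nj ni ≤ t pni := by
    have := chain_le e s d htri hs π L t hfeas pni pnj (by omega) hpni
    rwa [hπnj, hπni] at this
  norm_num [fwd] at hl
  have h1' : max (e i) (e j + s j + d j i) ≤ t pi_ := max_le heit (by linarith)
  have h2' : max (e nj) (max (e i) (e j + s j + d j i) + s i + d i nj) ≤ t pnj :=
    max_le henjt (by linarith)
  have h3' : max (e ni) (max (e nj) (max (e i) (e j + s j + d j i) + s i + d i nj) + s nj + d nj ni) ≤ t pni :=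
    max_le henit (by linarith)
  rcases hl with hl | hl <;> linarith
end

section
/- (Validity of the time-window shrinking.) Let K be a finite nonempty set of vehicles, each k in K with travel times d^k satisfying the triangle inequality and with nonnegative service durations s (service at the depot takes zero time). Define the shrunk bounds l'(n+i) = min{l(n+i), l_0 - min_{k in K} d^k(n+i, 2n+1) - s(n+i)}, l'(i) = min{l(i), l'(n+i) - min_{k in K} d^k(i, n+i) - s(i)}, e'(i) = max{e(i), e_0 + min_{k in K} d^k(0, i)}, and e'(n+i) = max{e(n+i), e'(i) + s(i) + min_{k in K} d^k(i, n+i)}. Then for every vehicle k in K and every route (pi_1, ..., pi_L) of vehicle k with pi_1 = 0 and pi_L = 2n+1, containing i at position p and n+i at position p' with 1 < p < p' < L, and every schedule (t_1, ..., t_L) satisfying t_r >= t_{r-1} + s(pi_{r-1}) + d^k(pi_{r-1}, pi_r) for 2 <= r <= L, t_1 >= e_0, t_L <= l_0, e(i) <= t_p <= l(i), and e(n+i) <= t_{p'} <= l(n+i), the schedule also satisfies e'(i) <= t_p <= l'(i) and e'(n+i) <= t_{p'} <= l'(n+i). Hence replacing the original time windows by the shrunk windows removes no feasible solution. -/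
/-- The minimum over the (finite, nonempty) vehicle set of the travel time
between two nodes. -/
noncomputable def dmin {V K : Type*} [Fintype K] [Nonempty K]
    (d : K → V → V → ℝ) (a b : V) : ℝ :=
  Finset.univ.inf' Finset.univ_nonempty fun k => d k a b

lemma dmin_le {V K : Type*} [Fintype K] [Nonempty K]
    (d : K → V → V → ℝ) (k : K) (a b : V) : dmin d a b ≤ d k a b :=
  Finset.inf'_le _ (Finset.mem_univ k)

/-- Validity of the time-window shrinking: any schedule of a route of some
vehicle `k` that starts at the depot no earlier than `e0`, returns to the depot
no later than `l0`, respects service durations and travel times along the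
route, and serves the pickup `i` and its delivery `ni` within their original
time windows, also serves them within the shrunk time windows
`[e' i, l' i]` and `[e' ni, l' ni]`. -/
theorem time_window_shrinking_valid {V K : Type*} [Fintype K] [Nonempty K]
    (depot0 depotEnd i ni : V)
    (e l s : V → ℝ) (e0 l0 : ℝ)
    (d : K → V → V → ℝ)
    (htri : ∀ (k : K) (a b c : V), d k a c ≤ d k a b + d k b c)
    (hs : ∀ x : V, 0 ≤ s x) (hs0 : s depot0 = 0)
    (k : K) (π : ℕ → V) (L : ℕ) (p p' : ℕ)
    (hstart : π 0 = depot0) (hend : π (L - 1) = depotEnd)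
    (hp0 : 0 < p) (hpp' : p < p') (hp'L : p' + 1 < L)
    (hπp : π p = i) (hπp' : π p' = ni)
    (t : ℕ → ℝ)
    (hchain : ∀ r, r + 1 < L →
      t r + s (π r) + d k (π r) (π (r + 1)) ≤ t (r + 1))
    (ht0 : e0 ≤ t 0) (htL : t (L - 1) ≤ l0)
    (htp1 : e i ≤ t p) (htp2 : t p ≤ l i)
    (htp'1 : e ni ≤ t p') (htp'2 : t p' ≤ l ni) :
    max (e i) (e0 + dmin d depot0 i) ≤ t p ∧
    t p ≤ min (l i)
        (min (l ni) (l0 - dmin d ni depotEnd - s ni) - dmin d i ni - s i) ∧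
    max (e ni) (max (e i) (e0 + dmin d depot0 i) + s i + dmin d i ni) ≤ t p' ∧
    t p' ≤ min (l ni) (l0 - dmin d ni depotEnd - s ni) := by
  -- general propagation lemma
  have key : ∀ b, b < L → ∀ a, a < b →
      t a + s (π a) + d k (π a) (π b) ≤ t b := by
    intro b
    induction b with
    | zero => intro _ a ha; omega
    | succ b ih =>
      intro hbL a ha
      rcases Nat.lt_succ_iff_lt_or_eq.mp ha with h | h
      · have h1 := ih (by omega) a h
        have h2 := hchain b hbL
        have h3 := htri k (π a) (π b) (π (b + 1))
        have h4 := hs (π b)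
        nlinarith
      · subst h; exact hchain a hbL
  have hLpos : p' + 1 ≤ L - 1 := by omega
  have hpL : p < L := by omega
  have hp'L2 : p' < L := by omega
  -- depot to i
  have h1 : t 0 + d k depot0 i ≤ t p := by
    have := key p hpL 0 hp0
    rw [hstart, hπp, hs0] at this; linarith
  have h2 : t p + s i + d k i ni ≤ t p' := by
    have := key p' hp'L2 p hpp'
    rwa [hπp, hπp'] at this
  have h3 : t p' + s ni + d k ni depotEnd ≤ t (L - 1) := by
    have := key (L - 1) (by omega) p' (by omega)
    rwa [hπp', hend] at this
  have d1 := dmin_le d k depot0 i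
  have d2 := dmin_le d k i ni
  have d3 := dmin_le d k ni depotEnd
  refine ⟨?_, ?_, ?_, ?_⟩
  · exact max_le htp1 (by linarith)
  · refine le_min htp2 ?_
    have hm : t p' ≤ min (l ni) (l0 - dmin d ni depotEnd - s ni) :=
      le_min htp'2 (by linarith)
    linarith
  · refine max_le htp'1 ?_
    have hm : max (e i) (e0 + dmin d depot0 i) ≤ t p :=
      max_le htp1 (by linarith)
    linarith
  · exact le_min htp'2 (by linarith)
end

section
/- (Validity of the path-based valid inequalities of the MIP formulation.) Let (v_1, ..., v_{w+1}) be a sequence of nodes with w >= 1, let Delta_r be the forward schedule along (v_1, ..., v_{w+1}) started at time e(v_1), and let l be a real with Delta_{w+1} > l. Let t_1, ..., t_{w+1} be reals with t_r >= e(v_r) for all 1 <= r <= w+1 and t_{w+1} <= l, and let x_1, ..., x_w be in {0,1} and satisfy: x_r = 1 implies t_{r+1} >= t_r + s(v_r) + d(v_r, v_{r+1}), for each 1 <= r <= w. Then sum_{r=1}^{w} x_r <= w - 1; i.e., a vehicle cannot use all w arcs of a path whose earliest arrival exceeds the destination's latest service time. -/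
/-- Validity of the path-based valid inequalities: if the earliest arrival of
the forward schedule along the `w`-arc path `v 0, ..., v w` (started at
`e (v 0)`) strictly exceeds `l`, then binary arc variables `x` whose activation
enforces the timing constraints, together with service times satisfying the
earliest-time bounds and `t w ≤ l`, cannot all equal one:
`∑_{r<w} x r ≤ w - 1`. -/
theorem path_valid_inequality {V : Type*} (e s : V → ℝ) (d : V → V → ℝ)
    (v : ℕ → V) (w : ℕ) (hw : 1 ≤ w)
    (l : ℝ) (hl : l < fwd e s d v (e (v 0)) w)
    (t : ℕ → ℝ) (ht : ∀ r ≤ w, e (v r) ≤ t r) (htl : t w ≤ l)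
    (x : ℕ → ℝ) (hx01 : ∀ r < w, x r = 0 ∨ x r = 1)
    (hxt : ∀ r < w, x r = 1 →
      t r + s (v r) + d (v r) (v (r + 1)) ≤ t (r + 1)) :
    ∑ r ∈ Finset.range w, x r ≤ (w : ℝ) - 1 := by
  by_cases hall : ∀ r < w, x r = 1
  · -- contradiction: fwd ≤ t by induction
    exfalso
    have key : ∀ r, r ≤ w → fwd e s d v (e (v 0)) r ≤ t r := by
      intro r
      induction r with
      | zero => intro _; simpa [fwd] using ht 0 (Nat.zero_le _)
      | succ n ih =>
        intro hn
        have hn' : n < w := Nat.lt_of_succ_le hn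
        have h1 := ih (le_of_lt hn')
        have h2 := hxt n hn' (hall n hn')
        have h3 := ht (n + 1) hn
        simp only [fwd]
        exact max_le h3 (by linarith)
    have := key w le_rfl
    linarith
  · push_neg at hall
    obtain ⟨r0, hr0w, hne⟩ := hall
    have hx0 : x r0 = 0 := (hx01 r0 hr0w).resolve_right hne
    have hmem : r0 ∈ Finset.range w := Finset.mem_range.2 hr0w
    have hsplit := (Finset.add_sum_erase _ x hmem).symm
    rw [hsplit, hx0, zero_add]
    calc ∑ r ∈ (Finset.range w).erase r0, x r
        ≤ ∑ r ∈ (Finset.range w).erase r0, (1 : ℝ) := by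
          apply Finset.sum_le_sum
          intro i hi
          rcases hx01 i (Finset.mem_range.1 (Finset.mem_of_mem_erase hi)) with h | h <;> simp [h]
      _ = ((Finset.range w).erase r0).card := by simp
      _ = (w : ℝ) - 1 := by
          rw [Finset.card_erase_of_mem hmem, Finset.card_range]
          have : (1:ℕ) ≤ w := hw
          push_cast [Nat.cast_sub this]
          ring
end

section
/- (Validity of the single-direction edge cut of the MIP formulation.) Let K be a finite set, let t_i and t_j be reals, and for each k in K let x_k, y_k be in {0,1} and let c_k > 0 and c'_k > 0 be reals such that x_k = 1 implies t_j >= t_i + c_k and y_k = 1 implies t_i >= t_j + c'_k. If moreover sum_{k in K} x_k <= 1 and sum_{k in K} y_k <= 1, then sum_{k in K} x_k + sum_{k in K} y_k <= 1; i.e., in any feasible solution an edge between two serviced nodes is traversed in at most one direction. -/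
/-- Validity of the single-direction edge cut: if activating `x k` forces
`t j ≥ t i + c k` with `c k > 0`, activating `y k` forces `t i ≥ t j + c' k`
with `c' k > 0`, and each family of binary variables sums to at most one, then
the two sums together are at most one — the edge is traversed in at most one
direction. -/
theorem single_direction_edge_cut {K : Type*} [Fintype K]
    (ti tj : ℝ) (x y c c' : K → ℝ)
    (hx01 : ∀ k, x k = 0 ∨ x k = 1) (hy01 : ∀ k, y k = 0 ∨ y k = 1)
    (hc : ∀ k, 0 < c k) (hc' : ∀ k, 0 < c' k)
    (hxt : ∀ k, x k = 1 → ti + c k ≤ tj)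
    (hyt : ∀ k, y k = 1 → tj + c' k ≤ ti)
    (hsx : ∑ k, x k ≤ 1) (hsy : ∑ k, y k ≤ 1) :
    (∑ k, x k) + (∑ k, y k) ≤ 1 := by
  by_cases h : ∃ k, x k = 1
  · obtain ⟨k, hk⟩ := h
    have htj := hxt k hk
    have hy0 : ∀ k', y k' = 0 := by
      intro k'
      rcases hy01 k' with h0 | h1
      · exact h0
      · have := hyt k' h1
        have := hc k; have := hc' k'
        linarith
    have : ∑ k, y k = 0 := Finset.sum_eq_zero (fun k' _ => hy0 k')
    linarith
  · push_neg at h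
    have hx0 : ∀ k, x k = 0 := fun k => (hx01 k).resolve_right (h k)
    have : ∑ k, x k = 0 := Finset.sum_eq_zero (fun k _ => hx0 k)
    linarith
end

section
/- (Load lower bound underlying the capacity-based arc elimination.) Let pi = (pi_1, ..., pi_M) be a route and define the load after position m as z_m = sum_{l=1}^{m} q(pi_l). If pickup nodes i and j with 1 <= i, j <= n and i ≠ j occur at positions p < p' of pi and neither delivery node n+i nor n+j occurs at a position <= p', then z_{p'} >= q_i + q_j. Consequently, if the route is executed by a vehicle of capacity Q, i.e., z_m <= Q for all 1 <= m <= M, then q_i + q_j <= Q; hence when q_i + q_j exceeds the largest vehicle capacity, the two requests cannot be simultaneously on board and the corresponding arcs pairing them can be eliminated. -/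
/-- Load lower bound underlying the capacity-based arc elimination.  Along a
route `π` of pairwise distinct nodes indexed `1, …, 2n` (pickup `r` has demand
`q r ≥ 0`, delivery `n + r` has demand `-q r`, and every delivery is preceded
by its pickup), if the distinct pickups `i` and `j` occur at positions
`p < p'` and neither delivery `n + i` nor `n + j` occurs at a position `≤ p'`,
then the load just after position `p'` is at least `q i + q j`; consequently,
any capacity `Q` respected by all the loads satisfies `q i + q j ≤ Q`. -/
theorem load_lower_bound (n : ℕ) (hn : 1 ≤ n) (q : ℕ → ℝ)
    (hq : ∀ r, 1 ≤ r → r ≤ n → 0 ≤ q r)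
    (hqd : ∀ r, 1 ≤ r → r ≤ n → q (n + r) = -q r)
    (M : ℕ) (π : ℕ → ℕ)
    (hrange : ∀ m < M, 1 ≤ π m ∧ π m ≤ 2 * n)
    (hdist : ∀ m < M, ∀ m' < M, π m = π m' → m = m')
    (hprec : ∀ m < M, ∀ r, 1 ≤ r → r ≤ n → π m = n + r → ∃ m' < m, π m' = r)
    (i j p p' : ℕ)
    (hi1 : 1 ≤ i) (hin : i ≤ n) (hj1 : 1 ≤ j) (hjn : j ≤ n) (hij : i ≠ j)
    (hpp' : p < p') (hp'M : p' < M)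
    (hπp : π p = i) (hπp' : π p' = j)
    (hnodel : ∀ m ≤ p', π m ≠ n + i ∧ π m ≠ n + j) :
    q i + q j ≤ ∑ m ∈ Finset.range (p' + 1), q (π m) ∧
    ∀ Q : ℝ, (∀ m < M, ∑ m' ∈ Finset.range (m + 1), q (π m') ≤ Q) →
      q i + q j ≤ Q := by
  have hne : p ≠ p' := Nat.ne_of_lt hpp'
  set S : Finset ℕ := ((Finset.range (p' + 1)).erase p').erase p with hSdef
  have hmemp : p ∈ (Finset.range (p' + 1)).erase p' := by
    simp [Finset.mem_erase, hne, Nat.lt_succ_of_lt hpp']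
  have hsum : ∑ m ∈ Finset.range (p' + 1), q (π m)
      = q (π p') + (q (π p) + ∑ m ∈ S, q (π m)) := by
    rw [← Finset.add_sum_erase _ _ (Finset.self_mem_range_succ p'),
        ← Finset.add_sum_erase _ _ hmemp]
  -- basic facts about members of S
  have hSfacts : ∀ m ∈ S, m ≤ p' ∧ m ≠ p ∧ m ≠ p' ∧ m < M := by
    intro m hm
    rw [hSdef] at hm
    simp only [Finset.mem_erase, Finset.mem_range] at hm
    obtain ⟨hmp, hmp', hmr⟩ := hm
    exact ⟨Nat.lt_succ_iff.mp hmr, hmp, hmp', lt_of_le_of_lt (Nat.lt_succ_iff.mp hmr) hp'M⟩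
  set P : Finset ℕ := S.filter (fun m => π m ≤ n) with hPdef
  set D : Finset ℕ := S.filter (fun m => ¬ π m ≤ n) with hDdef
  have hsplit : ∑ m ∈ S, q (π m) = ∑ m ∈ P, q (π m) + ∑ m ∈ D, q (π m) :=
    (Finset.sum_filter_add_sum_filter_not S (fun m => π m ≤ n) _).symm
  -- each delivery in D has a pickup partner in P
  have hpartner : ∀ m ∈ D, ∃ m', m' ∈ P ∧ π m' + n = π m := by
    intro m hm
    rw [hDdef] at hm
    simp only [Finset.mem_filter] at hm
    obtain ⟨hmS, hmn⟩ := hm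
    obtain ⟨hmle, hmp, hmp', hmM⟩ := hSfacts m hmS
    push_neg at hmn
    set r := π m - n with hr
    have hr1 : 1 ≤ r := by omega
    have hπm2n : π m ≤ 2 * n := (hrange m hmM).2
    have hrn : r ≤ n := by omega
    have hπm : π m = n + r := by omega
    obtain ⟨m', hm'm, hπm'⟩ := hprec m hmM r hr1 hrn hπm
    have hm'p' : m' ≤ p' := le_trans (Nat.le_of_lt hm'm) hmle
    have hri : r ≠ i := by
      intro h; exact (hnodel m hmle).1 (by rw [hπm, h])
    have hrj : r ≠ j := by
      intro h; exact (hnodel m hmle).2 (by rw [hπm, h])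
    have hm'ne : m' ≠ p := by
      intro h; apply hri; rw [← hπm', h, hπp]
    have hm'ne' : m' ≠ p' := by
      intro h; apply hrj; rw [← hπm', h, hπp']
    refine ⟨m', ?_, by omega⟩
    rw [hPdef]
    simp only [Finset.mem_filter]
    constructor
    · rw [hSdef]
      simp only [Finset.mem_erase, Finset.mem_range]
      exact ⟨hm'ne, hm'ne', by omega⟩
    · omega
  classical
  -- choose the partner function
  set g : ℕ → ℕ := fun m => if h : m ∈ D then Classical.choose (hpartner m h) else 0
    with hgdef
  have hg : ∀ m ∈ D, g m ∈ P ∧ π (g m) + n = π m := by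
    intro m hm
    have := Classical.choose_spec (hpartner m hm)
    simp only [hgdef, dif_pos hm]
    exact this
  have hSM : ∀ m ∈ S, m < M := fun m hm => (hSfacts m hm).2.2.2
  have hinj : ∀ m1 ∈ D, ∀ m2 ∈ D, g m1 = g m2 → m1 = m2 := by
    intro m1 h1 m2 h2 heq
    have e1 := (hg m1 h1).2
    have e2 := (hg m2 h2).2
    have hπeq : π m1 = π m2 := by rw [← e1, ← e2, heq]
    have hm1M : m1 < M := hSM m1 (Finset.mem_of_mem_filter m1 h1)
    have hm2M : m2 < M := hSM m2 (Finset.mem_of_mem_filter m2 h2)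
    exact hdist m1 hm1M m2 hm2M hπeq
  -- nonnegativity of pickup terms
  have hPnonneg : ∀ m ∈ P, 0 ≤ q (π m) := by
    intro m hm
    rw [hPdef] at hm
    simp only [Finset.mem_filter] at hm
    have hmM : m < M := hSM m hm.1
    exact hq (π m) (hrange m hmM).1 hm.2
  -- delivery sum equals minus sum over image of g
  have hDsum : ∑ m ∈ D, q (π m) = -∑ x ∈ D.image g, q (π x) := by
    rw [Finset.sum_image hinj, ← Finset.sum_neg_distrib]
    apply Finset.sum_congr rfl
    intro m hm
    obtain ⟨hgP, hgπ⟩ := hg m hm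
    rw [hPdef] at hgP
    simp only [Finset.mem_filter] at hgP
    have hgM : g m < M := hSM (g m) hgP.1
    have h1 : 1 ≤ π (g m) := (hrange (g m) hgM).1
    have hπm : π m = n + π (g m) := by omega
    rw [hπm, hqd (π (g m)) h1 hgP.2]
  have himgsub : D.image g ⊆ P := by
    intro x hx
    simp only [Finset.mem_image] at hx
    obtain ⟨m, hm, rfl⟩ := hx
    exact (hg m hm).1
  have himgle : ∑ x ∈ D.image g, q (π x) ≤ ∑ m ∈ P, q (π m) :=
    Finset.sum_le_sum_of_subset_of_nonneg himgsub (fun m hm _ => hPnonneg m hm)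
  have hSnonneg : 0 ≤ ∑ m ∈ S, q (π m) := by
    rw [hsplit, hDsum]; linarith
  have hmain : q i + q j ≤ ∑ m ∈ Finset.range (p' + 1), q (π m) := by
    rw [hsum, hπp, hπp']; linarith
  exact ⟨hmain, fun Q hQ => le_trans hmain (hQ p' hp'M)⟩
end
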